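/- (Sufficient decrease of the proximal step) Let E be the space of real m×n matrices, f : E → ℝ differentiable with L-Lipschitz gradient (‖∇f(X) − ∇f(Y)‖_F ≤ L‖X − Y‖_F for all X, Y), g : E → ℝ any function, S ⊆ E a nonempty set, M ∈ S, and α > 0. If M⁺ minimizes N ↦ ⟨∇f(M), N − M⟩ + (1/(2α))‖N − M‖_F² + g(N) over N ∈ S, then f(M⁺) + g(M⁺) ≤ f(M) + g(M) − (1/(2α) − L/2)‖M⁺ − M‖_F². -/

import Mathlib

open Matrix

attribute [local instance] Matrix.normedAddCommGroup Matrix.normedSpace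

/-- The Frobenius inner product `⟨A, B⟩ = Σ_{i,j} a_{ij} b_{ij}` of m×n matrices. -/
noncomputable def finner {m n : ℕ} (A B : Matrix (Fin m) (Fin n) ℝ) : ℝ :=
  ∑ i, ∑ j, A i j * B i j

/-- The squared Frobenius norm `‖V‖_F²`. -/
noncomputable def frobSq {m n : ℕ} (V : Matrix (Fin m) (Fin n) ℝ) : ℝ :=
  ∑ i, ∑ j, V i j ^ 2

/-- The Frobenius norm `‖V‖_F`. -/
noncomputable def frobNorm {m n : ℕ} (V : Matrix (Fin m) (Fin n) ℝ) : ℝ :=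
  Real.sqrt (frobSq V)

noncomputable def emb {m n : ℕ} (A : Matrix (Fin m) (Fin n) ℝ) :
    EuclideanSpace ℝ (Fin m × Fin n) := WithLp.toLp 2 (fun p : Fin m × Fin n => A p.1 p.2)

lemma finner_eq {m n : ℕ} (A B : Matrix (Fin m) (Fin n) ℝ) :
    finner A B = inner ℝ (emb A) (emb B) := by
  simp [finner, emb, PiLp.inner_apply, RCLike.inner_apply, Fintype.sum_prod_type, mul_comm]

lemma frobNorm_eq {m n : ℕ} (A : Matrix (Fin m) (Fin n) ℝ) :
    frobNorm A = ‖emb A‖ := by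
  rw [EuclideanSpace.norm_eq]
  simp [frobNorm, frobSq, emb, Fintype.sum_prod_type, sq_abs]

lemma frobSq_nonneg {m n : ℕ} (A : Matrix (Fin m) (Fin n) ℝ) : 0 ≤ frobSq A :=
  Finset.sum_nonneg fun _ _ => Finset.sum_nonneg fun _ _ => sq_nonneg _

lemma frobNorm_sq {m n : ℕ} (A : Matrix (Fin m) (Fin n) ℝ) :
    frobNorm A ^ 2 = frobSq A := Real.sq_sqrt (frobSq_nonneg A)

lemma frobNorm_nonneg {m n : ℕ} (A : Matrix (Fin m) (Fin n) ℝ) : 0 ≤ frobNorm A :=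
  Real.sqrt_nonneg _

lemma finner_le {m n : ℕ} (A B : Matrix (Fin m) (Fin n) ℝ) :
    finner A B ≤ frobNorm A * frobNorm B := by
  rw [finner_eq, frobNorm_eq, frobNorm_eq]; exact real_inner_le_norm _ _

lemma finner_sub_left {m n : ℕ} (A B C : Matrix (Fin m) (Fin n) ℝ) :
    finner (A - B) C = finner A C - finner B C := by
  simp [finner, sub_mul, Finset.sum_sub_distrib]

lemma frobNorm_smul {m n : ℕ} (t : ℝ) (A : Matrix (Fin m) (Fin n) ℝ) :
    frobNorm (t • A) = |t| * frobNorm A := by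
  have : emb (t • A) = t • emb A := by ext p; simp [emb]
  rw [frobNorm_eq, frobNorm_eq, this, norm_smul, Real.norm_eq_abs]

/-- sufficient decrease of the proximal step: if `f` is differentiable with
`L`-Lipschitz gradient `f'` (with respect to the Frobenius inner product/norm), `g` is any
function, `S` is a nonempty set, `M ∈ S`, `α > 0`, and `M⁺` minimizes
`N ↦ ⟨∇f(M), N − M⟩ + (1/(2α))‖N − M‖_F² + g(N)` over `S`, then
`f(M⁺) + g(M⁺) ≤ f(M) + g(M) − (1/(2α) − L/2)‖M⁺ − M‖_F²`. -/
theorem stmt_13 {m n : ℕ} (L α : ℝ) (hα : 0 < α)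
    (f : Matrix (Fin m) (Fin n) ℝ → ℝ)
    (f' : Matrix (Fin m) (Fin n) ℝ → Matrix (Fin m) (Fin n) ℝ)
    (hdiff : ∀ X : Matrix (Fin m) (Fin n) ℝ, DifferentiableAt ℝ f X ∧
      ∀ H : Matrix (Fin m) (Fin n) ℝ, fderiv ℝ f X H = finner (f' X) H)
    (hlip : ∀ X Y : Matrix (Fin m) (Fin n) ℝ, frobNorm (f' X - f' Y) ≤ L * frobNorm (X - Y))
    (g : Matrix (Fin m) (Fin n) ℝ → ℝ)
    (S : Set (Matrix (Fin m) (Fin n) ℝ)) (hS : S.Nonempty)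
    (M Mp : Matrix (Fin m) (Fin n) ℝ) (hM : M ∈ S) (hMp : Mp ∈ S)
    (hmin : ∀ N ∈ S,
      finner (f' M) (Mp - M) + 1 / (2 * α) * frobSq (Mp - M) + g Mp ≤
        finner (f' M) (N - M) + 1 / (2 * α) * frobSq (N - M) + g N) :
    f Mp + g Mp ≤ f M + g M - (1 / (2 * α) - L / 2) * frobSq (Mp - M) := by
  set D := Mp - M with hD
  set C := L * frobSq D with hC
  set ψ : ℝ → ℝ := fun t => f (M + t • D) - t * finner (f' M) D - C * t ^ 2 / 2 with hψdef
  have hψ : ∀ t : ℝ, HasDerivAt ψ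
      (finner (f' (M + t • D)) D - finner (f' M) D - C * t) t := by
    intro t
    have hline : HasDerivAt (fun s : ℝ => M + s • D) D t := by
      have h1 : HasDerivAt (fun s : ℝ => s • D) ((1 : ℝ) • D) t :=
        (hasDerivAt_id t).smul_const D
      rw [one_smul] at h1; exact h1.const_add M
    have hf1 : HasDerivAt (fun s : ℝ => f (M + s • D))
        (finner (f' (M + t • D)) D) t := by
      have := ((hdiff (M + t • D)).1.hasFDerivAt).comp_hasDerivAt t hline
      rw [← (hdiff (M + t • D)).2 D]; exact this
    have hf2 : HasDerivAt (fun s : ℝ => s * finner (f' M) D) (finner (f' M) D) t := by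
      simpa using (hasDerivAt_id t).mul_const (finner (f' M) D)
    have hf3 : HasDerivAt (fun s : ℝ => C * s ^ 2 / 2) (C * t) t := by
      have := ((hasDerivAt_pow 2 t).const_mul C).div_const 2
      refine this.congr_deriv ?_
      push_cast
      ring
    exact (hf1.sub hf2).sub hf3
  have hanti : AntitoneOn ψ (Set.Icc 0 1) := by
    apply antitoneOn_of_deriv_nonpos (convex_Icc 0 1)
    · exact fun t _ => ((hψ t).continuousAt).continuousWithinAt
    · exact fun t _ => ((hψ t).differentiableAt).differentiableWithinAt
    · intro t ht
      rw [interior_Icc] at ht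
      rw [(hψ t).deriv]
      have h1 : finner (f' (M + t • D)) D - finner (f' M) D
          = finner (f' (M + t • D) - f' M) D := (finner_sub_left _ _ _).symm
      have h2 : finner (f' (M + t • D) - f' M) D
          ≤ frobNorm (f' (M + t • D) - f' M) * frobNorm D := finner_le _ _
      have h3 : frobNorm (f' (M + t • D) - f' M) ≤ L * frobNorm (t • D) := by
        have := hlip (M + t • D) M
        simpa using this
      have h4 : frobNorm (t • D) = t * frobNorm D := by
        rw [frobNorm_smul, abs_of_pos ht.1]
      have h5 : frobNorm (f' (M + t • D) - f' M) * frobNorm D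
          ≤ (L * (t * frobNorm D)) * frobNorm D := by
        apply mul_le_mul_of_nonneg_right _ (frobNorm_nonneg D)
        rw [← h4]; exact h3
      have h6 : (L * (t * frobNorm D)) * frobNorm D = C * t := by
        rw [hC, ← frobNorm_sq]; ring
      have : finner (f' (M + t • D)) D - finner (f' M) D ≤ C * t := by
        rw [h1]; exact (h2.trans h5).trans_eq h6
      linarith
  have hψ10 : ψ 1 ≤ ψ 0 :=
    hanti (Set.mem_Icc.2 ⟨le_refl 0, zero_le_one⟩)
      (Set.mem_Icc.2 ⟨zero_le_one, le_refl 1⟩) zero_le_one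
  have hψ0 : ψ 0 = f M := by simp [hψdef]
  have hψ1 : ψ 1 = f Mp - finner (f' M) D - C / 2 := by
    simp [hψdef, hD]
  have key : f Mp ≤ f M + finner (f' M) D + C / 2 := by
    rw [hψ0, hψ1] at hψ10; linarith
  have hmin' := hmin M hM
  have hz1 : finner (f' M) (M - M) = 0 := by simp [finner]
  have hz2 : frobSq (M - M) = 0 := by simp [frobSq]
  rw [hz1, hz2] at hmin'
  simp only [mul_zero, zero_add] at hmin'
  -- already in terms of D
  rw [hC] at key
  linarith
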